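/- arXiv:1904.06662 — 4 statements merged into one kernel-verified Lean document; each statement's English description precedes it below -/
import Mathlib

section
/- For any bipartite multigraph G, the chromatic index of G equals the list chromatic index of G, i.e. χ'(G) = χ'_l(G). -/
open scoped Classical

/-- A multigraph on vertex type `V` with edge type `E`: each edge has a pair of
distinct endpoints (no loops); multiple edges with the same endpoints are allowed. -/
structure Multigraph (V : Type*) (E : Type*) where
  ends : E → Sym2 V
  not_isDiag : ∀ e, ¬ (ends e).IsDiag

namespace Multigraph

variable {V E : Type*}

/-- The line graph of a multigraph: vertices are the edges of `G`,
two of them adjacent iff the corresponding edges share an endpoint. -/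
def lineGraph (G : Multigraph V E) : SimpleGraph E where
  Adj e q := e ≠ q ∧ ∃ x, x ∈ G.ends e ∧ x ∈ G.ends q
  symm := ⟨by
    rintro e q ⟨hne, x, he, hq⟩
    exact ⟨hne.symm, x, hq, he⟩⟩
  loopless := ⟨fun e h => h.1 rfl⟩

/-- The degree of a vertex: the number of incident edges. -/
noncomputable def degree (G : Multigraph V E) (x : V) : ℕ :=
  {e : E | x ∈ G.ends e}.ncard

end Multigraph

/-- A simple graph `H` is `f`-choosable if from any assignment of color lists
of sizes prescribed by `f` one can choose a proper coloring. -/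
def Choosable {α : Type*} (H : SimpleGraph α) (f : α → ℕ) : Prop :=
  ∀ A : α → Finset ℕ, (∀ x, (A x).card = f x) →
    ∃ c : α → ℕ, (∀ x, c x ∈ A x) ∧ ∀ ⦃x y⦄, H.Adj x y → c x ≠ c y

/-- The chromatic number of a simple graph, as a natural number. -/
noncomputable def chromNum {α : Type*} (H : SimpleGraph α) : ℕ :=
  sInf {n | H.Colorable n}

/-- The choice number (list chromatic number) of a simple graph. -/
noncomputable def listChromNum {α : Type*} (H : SimpleGraph α) : ℕ :=
  sInf {n | Choosable H fun _ => n}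

/-- The clique number: the size of a maximum clique. -/
noncomputable def cliqNum {α : Type*} (H : SimpleGraph α) : ℕ :=
  sSup {n | ∃ s : Finset α, H.IsNClique n s}

/-- A graph is perfect if every induced subgraph has chromatic number
equal to its clique number. -/
def IsPerfect {α : Type*} (H : SimpleGraph α) : Prop :=
  ∀ s : Set α, chromNum (H.induce s) = cliqNum (H.induce s)

lemma galvin_kernel {V E : Type*} (xe ye : E → V) (c : E → ℕ)
    (hc : ∀ e q : E, e ≠ q → (xe e = xe q ∨ ye e = ye q) → c e ≠ c q) :
    ∀ S : Finset E, ∃ K : Finset E, K ⊆ S ∧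
      (∀ k ∈ K, ∀ k' ∈ K, k ≠ k' → xe k ≠ xe k' ∧ ye k ≠ ye k') ∧
      (∀ e ∈ S, e ∉ K → ∃ k ∈ K, (xe k = xe e ∧ c k < c e) ∨ (ye k = ye e ∧ c e < c k)) ∧
      (∀ g ∈ S, (∀ q ∈ S, xe q = xe g → c g ≤ c q) →
        ∃ k ∈ K, ye k = ye g ∧ c g ≤ c k) := by
  intro S
  induction S using Finset.strongInduction with
  | _ S ih =>
    classical
    set U : Finset E := S.filter (fun e => ∀ q ∈ S, xe q = xe e → c e ≤ c q) with hUdef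
    set K0 : Finset E := U.filter (fun e => ∀ q ∈ U, ye q = ye e → c q ≤ c e) with hK0def
    have hUS : U ⊆ S := Finset.filter_subset _ _
    have hK0U : K0 ⊆ U := Finset.filter_subset _ _
    -- key facts
    have hUmin : ∀ e ∈ U, ∀ q ∈ S, xe q = xe e → c e ≤ c q := by
      intro e he; exact (Finset.mem_filter.mp he).2
    have hK0max : ∀ e ∈ K0, ∀ q ∈ U, ye q = ye e → c q ≤ c e := by
      intro e he; exact (Finset.mem_filter.mp he).2
    have claimA : ∀ e ∈ U, ∃ m ∈ K0, ye m = ye e ∧ c e ≤ c m := by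
      intro e he
      obtain ⟨m, hm, hmax⟩ := Finset.exists_max_image
        (U.filter fun q => ye q = ye e) c ⟨e, Finset.mem_filter.mpr ⟨he, rfl⟩⟩
      obtain ⟨hmU, hmy⟩ := Finset.mem_filter.mp hm
      refine ⟨m, Finset.mem_filter.mpr ⟨hmU, ?_⟩, hmy, hmax e (Finset.mem_filter.mpr ⟨he, rfl⟩)⟩
      intro q hq hyq
      exact hmax q (Finset.mem_filter.mpr ⟨hq, hyq.trans hmy⟩)
    have claimB : ∀ e ∈ S, ∃ u ∈ U, xe u = xe e ∧ c u ≤ c e := by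
      intro e he
      obtain ⟨m, hm, hmin⟩ := Finset.exists_min_image
        (S.filter fun q => xe q = xe e) c ⟨e, Finset.mem_filter.mpr ⟨he, rfl⟩⟩
      obtain ⟨hmS, hmx⟩ := Finset.mem_filter.mp hm
      refine ⟨m, Finset.mem_filter.mpr ⟨hmS, ?_⟩, hmx, hmin e (Finset.mem_filter.mpr ⟨he, rfl⟩)⟩
      intro q hq hxq
      exact hmin q (Finset.mem_filter.mpr ⟨hq, hxq.trans hmx⟩)
    by_cases hUK : U ⊆ K0
    · -- base case: no rejections
      refine ⟨K0, hK0U.trans hUS, ?_, ?_, ?_⟩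
      · intro k hk k' hk' hne
        constructor
        · intro hx
          have h1 := hUmin k (hK0U hk) k' (hUS (hK0U hk')) hx.symm
          have h2 := hUmin k' (hK0U hk') k (hUS (hK0U hk)) hx
          exact hc k k' hne (Or.inl hx) (le_antisymm h1 h2)
        · intro hy
          have h1 := hK0max k hk k' (hK0U hk') hy.symm
          have h2 := hK0max k' hk' k (hK0U hk) hy
          exact hc k k' hne (Or.inr hy) (le_antisymm h2 h1)
      · intro e he heK
        have heU : e ∉ U := fun h => heK (hUK h)
        obtain ⟨u, hu, hux, huc⟩ := claimB e he
        have hne : u ≠ e := fun h => heU (h ▸ hu)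
        have : c u < c e := lt_of_le_of_ne huc (hc u e hne (Or.inl hux))
        exact ⟨u, hUK hu, Or.inl ⟨hux, this⟩⟩
      · intro g hg hmin
        have hgU : g ∈ U := Finset.mem_filter.mpr ⟨hg, hmin⟩
        obtain ⟨m, hm, hmy, hmc⟩ := claimA g hgU
        exact ⟨m, hm, hmy, hmc⟩
    · -- rejections R = U \ K0 nonempty; recurse on S' = S \ R
      set R : Finset E := U \ K0 with hRdef
      have hRne : R.Nonempty := by
        rw [Finset.sdiff_nonempty]; exact hUK
      set S' : Finset E := S \ R with hS'def
      have hss : S' ⊂ S := by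
        obtain ⟨r, hr⟩ := hRne
        refine Finset.ssubset_iff_of_subset (Finset.sdiff_subset) |>.mpr ?_
        exact ⟨r, hUS ((Finset.sdiff_subset) hr), fun h => (Finset.mem_sdiff.mp h).2 hr⟩
      obtain ⟨K, hKS', hKind, hKker, hKext⟩ := ih S' hss
      have hK0S' : ∀ m ∈ K0, m ∈ S' := by
        intro m hm
        exact Finset.mem_sdiff.mpr ⟨hUS (hK0U hm), fun h => (Finset.mem_sdiff.mp h).2 hm⟩
      have hK0min' : ∀ m ∈ K0, ∀ q ∈ S', xe q = xe m → c m ≤ c q := by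
        intro m hm q hq hx
        exact hUmin m (hK0U hm) q ((Finset.sdiff_subset) hq) hx
      -- for any g in U, find k in K at ye g beating it
      have keyU : ∀ g ∈ U, ∃ k ∈ K, ye k = ye g ∧ c g ≤ c k ∧ (g ∉ K0 → c g < c k) := by
        intro g hg
        by_cases hgK0 : g ∈ K0
        · obtain ⟨k, hk, hky, hkc⟩ := hKext g (hK0S' g hgK0) (hK0min' g hgK0)
          exact ⟨k, hk, hky, hkc, fun h => absurd hgK0 h⟩
        · obtain ⟨m, hm, hmy, hmc⟩ := claimA g hg
          have hne : g ≠ m := fun h => hgK0 (h ▸ hm)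
          have hlt : c g < c m := lt_of_le_of_ne hmc (hc g m hne (Or.inr hmy.symm))
          obtain ⟨k, hk, hky, hkc⟩ := hKext m (hK0S' m hm) (hK0min' m hm)
          exact ⟨k, hk, hky.trans hmy, le_of_lt (lt_of_lt_of_le hlt hkc),
            fun _ => lt_of_lt_of_le hlt hkc⟩
      refine ⟨K, hKS'.trans (Finset.sdiff_subset), hKind, ?_, ?_⟩
      · intro e he heK
        by_cases heR : e ∈ R
        · have heU : e ∈ U := (Finset.mem_sdiff.mp heR).1
          have heK0 : e ∉ K0 := (Finset.mem_sdiff.mp heR).2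
          obtain ⟨k, hk, hky, _, hlt⟩ := keyU e heU
          exact ⟨k, hk, Or.inr ⟨hky, hlt heK0⟩⟩
        · exact hKker e (Finset.mem_sdiff.mpr ⟨he, heR⟩) heK
      · intro g hg hmin
        have hgU : g ∈ U := Finset.mem_filter.mpr ⟨hg, hmin⟩
        obtain ⟨k, hk, hky, hkc, _⟩ := keyU g hgU
        exact ⟨k, hk, hky, hkc⟩

lemma galvin_choose {V E : Type*} (xe ye : E → V) (c : E → ℕ)
    (hc : ∀ e q : E, e ≠ q → (xe e = xe q ∨ ye e = ye q) → c e ≠ c q) :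
    ∀ T : Finset E, ∀ A : E → Finset ℕ,
      (∀ e ∈ T, (T.filter (fun q => (xe q = xe e ∧ c q < c e) ∨ (ye q = ye e ∧ c e < c q))).card
          < (A e).card) →
      ∃ ch : E → ℕ, (∀ e ∈ T, ch e ∈ A e) ∧
        ∀ e ∈ T, ∀ q ∈ T, e ≠ q → (xe e = xe q ∨ ye e = ye q) → ch e ≠ ch q := by
  intro T
  induction T using Finset.strongInduction with
  | _ T ih =>
    classical
    intro A hA
    rcases Finset.eq_empty_or_nonempty T with rfl | ⟨e0, he0⟩
    · exact ⟨fun _ => 0, by simp, by simp⟩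
    · have hA0 : (A e0).Nonempty := by
        rw [← Finset.card_pos]
        exact lt_of_le_of_lt (Nat.zero_le _) (hA e0 he0)
      obtain ⟨α, hα⟩ := hA0
      set S : Finset E := T.filter (fun e => α ∈ A e) with hSdef
      obtain ⟨K, hKS, hKind, hKker, _⟩ := galvin_kernel xe ye c hc S
      have hKT : K ⊆ T := hKS.trans (Finset.filter_subset _ _)
      have hKne : K.Nonempty := by
        rcases Finset.eq_empty_or_nonempty K with h | h
        · exfalso
          obtain ⟨k, hk, _⟩ := hKker e0 (Finset.mem_filter.mpr ⟨he0, hα⟩) (by simp [h])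
          simp [h] at hk
        · exact h
      set T' : Finset E := T \ K with hT'def
      have hss : T' ⊂ T := by
        obtain ⟨k, hk⟩ := hKne
        refine Finset.ssubset_iff_of_subset (Finset.sdiff_subset) |>.mpr
          ⟨k, hKT hk, fun h => (Finset.mem_sdiff.mp h).2 hk⟩
      set A' : E → Finset ℕ := fun e => if e ∈ S then (A e).erase α else A e with hA'def
      have hdeg' : ∀ e ∈ T', (T'.filter (fun q => (xe q = xe e ∧ c q < c e) ∨
          (ye q = ye e ∧ c e < c q))).card < (A' e).card := by
        intro e he'
        obtain ⟨heT, heK⟩ := Finset.mem_sdiff.mp he'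
        set P : E → Prop := fun q => (xe q = xe e ∧ c q < c e) ∨ (ye q = ye e ∧ c e < c q)
          with hPdef
        change (T'.filter P).card < (A' e).card
        have hAe : (T.filter P).card < (A e).card := hA e heT
        have hsub : T'.filter P ⊆ T.filter P :=
          Finset.filter_subset_filter _ (Finset.sdiff_subset)
        by_cases heS : e ∈ S
        · obtain ⟨k, hk, hkP⟩ := hKker e heS heK
          have hkmem : k ∈ T.filter P := Finset.mem_filter.mpr ⟨hKT hk, hkP⟩
          have hknot : k ∉ T'.filter P := by
            intro h
            exact (Finset.mem_sdiff.mp (Finset.mem_filter.mp h).1).2 hk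
          have hlt : (T'.filter P).card < (T.filter P).card :=
            Finset.card_lt_card ⟨hsub, fun h => hknot (h hkmem)⟩
          have hαe : α ∈ A e := (Finset.mem_filter.mp heS).2
          have hA'e : (A' e).card = (A e).card - 1 := by
            simp only [hA'def, heS, if_pos]
            exact Finset.card_erase_of_mem hαe
          omega
        · have hA'e : A' e = A e := by simp only [hA'def, heS, if_neg, ite_false]
          rw [hA'e]
          exact lt_of_le_of_lt (Finset.card_le_card hsub) hAe
      obtain ⟨ch', hch'mem, hch'prop⟩ := ih T' hss A' hdeg'
      refine ⟨fun e => if e ∈ K then α else ch' e, ?_, ?_⟩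
      · intro e he
        by_cases heK : e ∈ K
        · simp only [heK, if_pos]
          exact (Finset.mem_filter.mp (hKS heK)).2
        · simp only [heK, if_neg, ite_false]
          have := hch'mem e (Finset.mem_sdiff.mpr ⟨he, heK⟩)
          rw [hA'def] at this
          by_cases heS : e ∈ S
          · simp only [heS, if_pos] at this
            exact Finset.erase_subset _ _ this
          · simpa [heS] using this
      · intro e he q hq hne hsh
        by_cases heK : e ∈ K <;> by_cases hqK : q ∈ K
        · exfalso
          obtain ⟨hx, hy⟩ := hKind e heK q hqK hne
          rcases hsh with h | h
          exacts [hx h, hy h]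
        · simp only [heK, hqK, if_pos, if_neg, ite_false, ite_true]
          have hq' : q ∈ T' := Finset.mem_sdiff.mpr ⟨hq, hqK⟩
          have hmem := hch'mem q hq'
          intro heq
          by_cases hqS : q ∈ S
          · rw [hA'def] at hmem; simp only [hqS, if_pos] at hmem
            exact (Finset.notMem_erase α (A q)) (heq ▸ hmem)
          · have : α ∉ A q := fun h => hqS (Finset.mem_filter.mpr ⟨hq, h⟩)
            rw [hA'def] at hmem; simp only [hqS, ite_false] at hmem
            exact this (heq ▸ hmem)
        · simp only [heK, hqK, if_pos, if_neg, ite_false, ite_true]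
          have he' : e ∈ T' := Finset.mem_sdiff.mpr ⟨he, heK⟩
          have hmem := hch'mem e he'
          intro heq
          by_cases heS : e ∈ S
          · rw [hA'def] at hmem; simp only [heS, if_pos] at hmem
            exact (Finset.notMem_erase α (A e)) (heq ▸ hmem)
          · have : α ∉ A e := fun h => heS (Finset.mem_filter.mpr ⟨he, h⟩)
            rw [hA'def] at hmem; simp only [heS, ite_false] at hmem
            exact this (heq ▸ hmem)
        · simp only [heK, hqK, ite_false]
          exact hch'prop e (Finset.mem_sdiff.mpr ⟨he, heK⟩) q
            (Finset.mem_sdiff.mpr ⟨hq, hqK⟩) hne hsh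

/-- **Galvin's theorem.** For an arbitrary bipartite multigraph `G`,
the chromatic index equals the list chromatic index. -/
theorem stmt_3 {V E : Type*} [Fintype V] [Fintype E] (G : Multigraph V E)
    (hbip : ∃ X : Set V, ∀ (e : E) (u w : V), G.ends e = s(u, w) → (u ∈ X ↔ w ∉ X)) :
    chromNum (Multigraph.lineGraph G) = listChromNum (Multigraph.lineGraph G) := by
  classical
  obtain ⟨X, hX⟩ := hbip
  -- extract oriented endpoints
  have hends : ∀ e : E, ∃ u v : V, G.ends e = s(u, v) ∧ u ∈ X ∧ v ∉ X := by
    intro e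
    obtain ⟨u, v, huv⟩ : ∃ u v, G.ends e = s(u, v) := by
      generalize G.ends e = z
      induction z using Sym2.ind with
      | _ u v => exact ⟨u, v, rfl⟩
    have := hX e u v huv
    by_cases hu : u ∈ X
    · exact ⟨u, v, huv, hu, this.mp hu⟩
    · have hv : v ∈ X := by by_contra hv; exact hu (this.mpr hv)
      refine ⟨v, u, ?_, hv, hu⟩
      rw [huv, Sym2.eq_swap]
  choose xe ye hxy hxX hyX using hends
  -- adjacency characterization
  have hmem : ∀ (e : E) (z : V), z ∈ G.ends e ↔ z = xe e ∨ z = ye e := by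
    intro e z; rw [hxy e, Sym2.mem_iff]
  have hadj : ∀ e q : E, (Multigraph.lineGraph G).Adj e q ↔
      (e ≠ q ∧ (xe e = xe q ∨ ye e = ye q)) := by
    intro e q
    constructor
    · rintro ⟨hne, z, hze, hzq⟩
      refine ⟨hne, ?_⟩
      rw [hmem] at hze hzq
      rcases hze with rfl | rfl <;> rcases hzq with h | h
      · exact Or.inl h
      · exact absurd (h ▸ hxX e) (hyX q)
      · exact absurd (h ▸ hxX q) (h ▸ hyX e)
      · exact Or.inr h
    · rintro ⟨hne, h | h⟩
      · exact ⟨hne, xe e, (hmem e _).mpr (Or.inl rfl), (hmem q _).mpr (Or.inl h)⟩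
      · exact ⟨hne, ye e, (hmem e _).mpr (Or.inr rfl), (hmem q _).mpr (Or.inr h)⟩
  set H := Multigraph.lineGraph G with hH
  -- colorable with some number
  have hcolset : {n | H.Colorable n}.Nonempty := by
    refine ⟨Fintype.card E, ⟨⟨fun e => Fintype.equivFin E e, ?_⟩⟩⟩
    intro a b hab h
    exact ((hadj a b).mp hab).1 ((Fintype.equivFin E).injective h)
  set m := chromNum H with hm
  have hmcol : H.Colorable m := Nat.sInf_mem hcolset
  obtain ⟨C⟩ := hmcol
  have hc : ∀ e q : E, e ≠ q → (xe e = xe q ∨ ye e = ye q) →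
      ((C e : ℕ)) ≠ ((C q : ℕ)) := by
    intro e q hne hsh h
    exact C.valid ((hadj e q).mpr ⟨hne, hsh⟩) (Fin.val_injective h)
  -- Galvin: H is m-choosable
  have hchoose : Choosable H (fun _ => m) := by
    intro A hA
    have hdeg : ∀ e ∈ (Finset.univ : Finset E),
        ((Finset.univ : Finset E).filter (fun q => (xe q = xe e ∧ (C q : ℕ) < (C e : ℕ)) ∨
          (ye q = ye e ∧ (C e : ℕ) < (C q : ℕ)))).card < (A e).card := by
      intro e _
      rw [hA e]
      show _ < m
      set F := (Finset.univ : Finset E).filter (fun q => (xe q = xe e ∧ (C q : ℕ) < (C e : ℕ)) ∨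
          (ye q = ye e ∧ (C e : ℕ) < (C q : ℕ))) with hF
      have hmpos : 0 < m := (C e).pos
      have hcard : F.card ≤ ((Finset.range m).erase (C e : ℕ)).card := by
        apply Finset.card_le_card_of_injOn (fun q => (C q : ℕ))
        · intro q hq
          rw [hF, Finset.mem_coe, Finset.mem_filter] at hq
          refine Finset.mem_erase.mpr ⟨?_, Finset.mem_range.mpr (C q).isLt⟩
          rcases hq.2 with ⟨_, hlt⟩ | ⟨_, hlt⟩
          · exact Nat.ne_of_lt hlt
          · exact (Nat.ne_of_lt hlt).symm
        · intro q hq q' hq' hval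
          simp only [hF, Finset.coe_filter, Set.mem_setOf_eq] at hq hq'
          have hval' : (C q : ℕ) = (C q' : ℕ) := hval
          by_contra hne
          rcases hq.2 with ⟨hx, hlt⟩ | ⟨hy, hlt⟩ <;> rcases hq'.2 with ⟨hx', hlt'⟩ | ⟨hy', hlt'⟩
          · exact hc q q' hne (Or.inl (hx.trans hx'.symm)) hval'
          · omega
          · omega
          · exact hc q q' hne (Or.inr (hy.trans hy'.symm)) hval'
      have : ((Finset.range m).erase (C e : ℕ)).card = m - 1 := by
        rw [Finset.card_erase_of_mem (Finset.mem_range.mpr (C e).isLt), Finset.card_range]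
      omega
    obtain ⟨ch, hchmem, hchprop⟩ := galvin_choose xe ye (fun e => (C e : ℕ)) hc Finset.univ A hdeg
    refine ⟨ch, fun e => hchmem e (Finset.mem_univ e), ?_⟩
    intro e q hadj'
    obtain ⟨hne, hsh⟩ := (hadj e q).mp hadj'
    exact hchprop e (Finset.mem_univ e) q (Finset.mem_univ q) hne hsh
  -- conclude
  have h1 : listChromNum H ≤ m := Nat.sInf_le hchoose
  have h2 : m ≤ listChromNum H := by
    have hne : {n | Choosable H fun _ => n}.Nonempty := ⟨m, hchoose⟩
    have hch : Choosable H fun _ => listChromNum H := Nat.sInf_mem hne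
    have hcol : H.Colorable (listChromNum H) := by
      obtain ⟨ch, hchmem, hchprop⟩ := hch (fun _ => Finset.range (listChromNum H))
        (fun _ => Finset.card_range _)
      exact ⟨⟨fun e => ⟨ch e, Finset.mem_range.mp (hchmem e)⟩, by
        intro a b hab h
        exact hchprop hab (congrArg Fin.val h)⟩⟩
    exact Nat.sInf_le hcol
  omega
end

section
/- For any multigraph G on four vertices, the chromatic index of G equals the list chromatic index of G, i.e. χ'(G) = χ'_l(G). -/
open Finset


open scoped Classical

section AuxLCC

open Finset

variable {E : Type*} [DecidableEq E]

noncomputable def wgt (t : E → Fin 3) (σ : E → Bool) (S : Finset E) : ℕ :=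
  ∑ i : Fin 3,
    max (S.filter (fun e => t e = i ∧ σ e = true)).card
        (S.filter (fun e => t e = i ∧ σ e = false)).card

lemma filter_split (t : E → Fin 3) (σ : E → Bool) (s : Finset E) (i : Fin 3) :
    (s.filter (fun e => t e = i)).card
      = (s.filter (fun e => t e = i ∧ σ e = true)).card
        + (s.filter (fun e => t e = i ∧ σ e = false)).card := by
  have hU : s.filter (fun e => t e = i)
      = s.filter (fun e => t e = i ∧ σ e = true) ∪ s.filter (fun e => t e = i ∧ σ e = false) := by
    ext e
    simp only [mem_filter, mem_union]
    rcases Bool.eq_false_or_eq_true (σ e) with h | h <;> tauto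
  rw [hU, card_union_of_disjoint]
  rw [Finset.disjoint_left]
  rintro e he he'
  simp only [mem_filter] at he he'
  rw [he.2.2] at he'
  exact absurd he'.2.2 (by simp)

lemma card_le_two_wgt (t : E → Fin 3) (σ : E → Bool) (S : Finset E) :
    S.card ≤ 2 * wgt t σ S := by
  have h1 : S.card = ∑ i : Fin 3, (S.filter (fun e => t e = i)).card :=
    card_eq_sum_card_fiberwise (by simp)
  rw [h1, wgt, mul_sum]
  refine sum_le_sum fun i _ => ?_
  rw [filter_split t σ S i]
  have := le_max_left (S.filter (fun e => t e = i ∧ σ e = true)).card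
      (S.filter (fun e => t e = i ∧ σ e = false)).card
  have := le_max_right (S.filter (fun e => t e = i ∧ σ e = true)).card
      (S.filter (fun e => t e = i ∧ σ e = false)).card
  omega

lemma core (t : E → Fin 3) (σ : E → Bool) :
    ∀ (n : ℕ) (S : Finset E), S.card ≤ n → ∀ (A : E → Finset ℕ),
      (∀ e ∈ S, wgt t σ S ≤ (A e).card) →
      ∃ c : E → ℕ, (∀ e ∈ S, c e ∈ A e) ∧
        ∀ e ∈ S, ∀ q ∈ S, e ≠ q → (t e ≠ t q ∨ σ e = σ q) → c e ≠ c q := by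
  intro n
  induction n with
  | zero =>
    intro S hS A _
    have : S = ∅ := Finset.card_eq_zero.mp (Nat.le_zero.mp hS)
    subst this
    exact ⟨fun _ => 0, fun e he => absurd he (notMem_empty e),
      fun e he => absurd he (notMem_empty e)⟩
  | succ n ihn =>
    intro S hScard A hA
    by_cases hpair : ∃ u ∈ S, ∃ v ∈ S, t u = t v ∧ σ u = true ∧ σ v = false ∧
        (A u ∩ A v).Nonempty
    · obtain ⟨u, hu, v, hv, htuv, hσu, hσv, c₀, hc₀⟩ := hpair
      have huv : u ≠ v := by
        intro h; rw [h, hσv] at hσu; exact absurd hσu (by simp)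
      set S' : Finset E := S \ {u, v} with hS'def
      have hS'sub : S' ⊆ S := sdiff_subset
      have huS' : u ∉ S' := by simp [hS'def]
      have hvS' : v ∉ S' := by simp [hS'def]
      have hS'ssub : S' ⊂ S := ssubset_iff_of_subset hS'sub |>.mpr ⟨u, hu, huS'⟩
      have hw : wgt t σ S' < wgt t σ S := by
        apply Finset.sum_lt_sum
        · intro i _
          exact max_le_max (card_le_card (filter_subset_filter _ hS'sub))
            (card_le_card (filter_subset_filter _ hS'sub))
        · refine ⟨t u, mem_univ _, ?_⟩
          apply max_lt_max
          · apply card_lt_card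
            rw [Finset.ssubset_iff_of_subset (filter_subset_filter _ hS'sub)]
            exact ⟨u, mem_filter.mpr ⟨hu, rfl, hσu⟩, fun h => huS' (mem_filter.mp h).1⟩
          · apply card_lt_card
            rw [Finset.ssubset_iff_of_subset (filter_subset_filter _ hS'sub)]
            exact ⟨v, mem_filter.mpr ⟨hv, htuv.symm, hσv⟩, fun h => hvS' (mem_filter.mp h).1⟩
      have hA' : ∀ e ∈ S', wgt t σ S' ≤ ((A e).erase c₀).card := by
        intro e he
        have h1 := hA e (hS'sub he)
        have h2 : (A e).card - 1 ≤ ((A e).erase c₀).card := by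
          by_cases hc : c₀ ∈ A e
          · rw [Finset.card_erase_of_mem hc]
          · rw [Finset.erase_eq_of_notMem hc]; omega
        omega
      have hcard' : S'.card ≤ n := by
        have := card_lt_card hS'ssub
        omega
      obtain ⟨c', hc'mem, hc'prop⟩ := ihn S' hcard' (fun e => (A e).erase c₀) hA'
      refine ⟨fun e => if e = u ∨ e = v then c₀ else c' e, ?_, ?_⟩
      · intro e he
        dsimp only
        by_cases h : e = u ∨ e = v
        · rw [if_pos h]
          rcases h with rfl | rfl
          · exact mem_of_mem_inter_left hc₀
          · exact mem_of_mem_inter_right hc₀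
        · rw [if_neg h]
          push_neg at h
          exact Finset.mem_of_mem_erase (hc'mem e (by simp [hS'def, he, h.1, h.2]))
      · intro e he q hq hne hcond
        dsimp only
        have hmemS' : ∀ x ∈ S, ¬(x = u ∨ x = v) → x ∈ S' := by
          intro x hx h; push_neg at h; simp [hS'def, hx, h.1, h.2]
        by_cases he' : e = u ∨ e = v <;> by_cases hq' : q = u ∨ q = v
        · exfalso
          rcases he' with rfl | rfl <;> rcases hq' with rfl | rfl
          · exact hne rfl
          · rcases hcond with h | h
            · exact h (by rw [htuv])
            · rw [hσu, hσv] at h; exact absurd h (by simp)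
          · rcases hcond with h | h
            · exact h (by rw [htuv])
            · rw [hσu, hσv] at h; exact absurd h (by simp)
          · exact hne rfl
        · rw [if_pos he', if_neg hq']
          exact fun h => (Finset.ne_of_mem_erase (hc'mem q (hmemS' q hq hq'))) h.symm
        · rw [if_neg he', if_pos hq']
          exact Finset.ne_of_mem_erase (hc'mem e (hmemS' e he he'))
        · rw [if_neg he', if_neg hq']
          exact hc'prop e (hmemS' e he he') q (hmemS' q hq hq') hne hcond
    · push_neg at hpair
      have hdisj : ∀ u ∈ S, ∀ v ∈ S, t u = t v → σ u = true → σ v = false →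
          A u ∩ A v = ∅ := by
        intro u hu v hv h1 h2 h3
        exact hpair u hu v hv h1 h2 h3
      have hall : ∀ s : Finset {e // e ∈ S},
          s.card ≤ (s.biUnion (fun x : {e // e ∈ S} => A x.1)).card := by
        intro s
        set s' : Finset E := s.image (fun x : {e // e ∈ S} => x.1) with hs'def
        have hs'card : s'.card = s.card :=
          card_image_of_injective _ Subtype.val_injective
        have hs'S : s' ⊆ S := by
          intro e he
          simp only [hs'def, mem_image] at he
          obtain ⟨x, _, rfl⟩ := he
          exact x.2
        by_cases hsmall : s.card ≤ wgt t σ S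
        · rcases s.eq_empty_or_nonempty with rfl | ⟨x, hx⟩
          · simp
          · calc s.card ≤ wgt t σ S := hsmall
              _ ≤ (A x.1).card := hA x.1 x.2
              _ ≤ (s.biUnion fun x : {e // e ∈ S} => A x.1).card :=
                card_le_card (subset_biUnion_of_mem (fun x : {e // e ∈ S} => A x.1) hx)
        · have hex : ∃ i, (s'.filter (fun e => t e = i ∧ σ e = true)).Nonempty ∧
              (s'.filter (fun e => t e = i ∧ σ e = false)).Nonempty := by
            by_contra hno
            push_neg at hno
            apply hsmall
            rw [← hs'card]
            calc s'.card = ∑ i : Fin 3, (s'.filter (fun e => t e = i)).card :=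
                card_eq_sum_card_fiberwise (by simp)
              _ ≤ wgt t σ S := by
                refine sum_le_sum fun i _ => ?_
                rw [filter_split t σ s' i]
                have hT : (s'.filter (fun e => t e = i ∧ σ e = true)).card
                    ≤ (S.filter (fun e => t e = i ∧ σ e = true)).card :=
                  card_le_card (filter_subset_filter _ hs'S)
                have hF : (s'.filter (fun e => t e = i ∧ σ e = false)).card
                    ≤ (S.filter (fun e => t e = i ∧ σ e = false)).card :=
                  card_le_card (filter_subset_filter _ hs'S)
                have hmaxT := le_max_left (S.filter (fun e => t e = i ∧ σ e = true)).card
                  (S.filter (fun e => t e = i ∧ σ e = false)).card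
                have hmaxF := le_max_right (S.filter (fun e => t e = i ∧ σ e = true)).card
                  (S.filter (fun e => t e = i ∧ σ e = false)).card
                rcases Classical.em ((s'.filter (fun e => t e = i ∧ σ e = true)).Nonempty) with hT | hT
                · have h0 : (s'.filter (fun e => t e = i ∧ σ e = false)).card = 0 := by
                    rw [card_eq_zero]; exact hno i hT
                  omega
                · have h0 : (s'.filter (fun e => t e = i ∧ σ e = true)).card = 0 := by
                    rw [card_eq_zero, ← not_nonempty_iff_eq_empty]; exact hT
                  omega
          obtain ⟨i, ⟨u, hu⟩, ⟨v, hv⟩⟩ := hex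
          simp only [mem_filter] at hu hv
          have huS : u ∈ S := hs'S hu.1
          have hvS : v ∈ S := hs'S hv.1
          have hAdisj : A u ∩ A v = ∅ :=
            hdisj u huS v hvS (by rw [hu.2.1, hv.2.1]) hu.2.2 hv.2.2
          obtain ⟨xu, hxus, hxu⟩ := mem_image.mp hu.1
          obtain ⟨xv, hxvs, hxv⟩ := mem_image.mp hv.1
          have hsub : A u ∪ A v ⊆ s.biUnion fun x : {e // e ∈ S} => A x.1 := by
            apply union_subset
            · rw [← hxu]
              exact subset_biUnion_of_mem (fun x : {e // e ∈ S} => A x.1) hxus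
            · rw [← hxv]
              exact subset_biUnion_of_mem (fun x : {e // e ∈ S} => A x.1) hxvs
          have hcardU : (A u ∪ A v).card = (A u).card + (A v).card :=
            card_union_of_disjoint (disjoint_iff_inter_eq_empty.mpr hAdisj)
          have h2w := card_le_two_wgt t σ S
          have hscard : s.card ≤ S.card := by rw [← hs'card]; exact card_le_card hs'S
          have hbig := card_le_card hsub
          have hAu := hA u huS
          have hAv := hA v hvS
          omega
      obtain ⟨f, finj, fmem⟩ :=
        (Finset.all_card_le_biUnion_card_iff_exists_injective
          (fun x : {e // e ∈ S} => A x.1)).mp hall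
      refine ⟨fun e => if h : e ∈ S then f ⟨e, h⟩ else 0, ?_, ?_⟩
      · intro e he; dsimp only; rw [dif_pos he]; exact fmem ⟨e, he⟩
      · intro e he q hq hne _
        dsimp only
        rw [dif_pos he, dif_pos hq]
        intro h
        exact hne (congrArg Subtype.val (finj h))

lemma wgt_def {E : Type*} [DecidableEq E] (t : E → Fin 3) (σ : E → Bool) (S : Finset E) :
    wgt t σ S = ∑ i : Fin 3,
      max (S.filter (fun e => t e = i ∧ σ e = true)).card
          (S.filter (fun e => t e = i ∧ σ e = false)).card := rfl

def t0 : Sym2 (Fin 4) → Fin 3 := fun s =>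
  if (0 : Fin 4) ∈ s then (if (1 : Fin 4) ∈ s then 0 else if (2 : Fin 4) ∈ s then 1 else 2)
  else (if (1 : Fin 4) ∈ s then (if (2 : Fin 4) ∈ s then 2 else 1) else 0)

def s0 : Sym2 (Fin 4) → Bool := fun s => decide ((0 : Fin 4) ∈ s)

lemma keyfact : ∀ s s' : Sym2 (Fin 4), ¬s.IsDiag → ¬s'.IsDiag →
    ((∃ x, x ∈ s ∧ x ∈ s') ↔ ¬(t0 s = t0 s' ∧ ¬(s0 s = s0 s'))) := by decide


lemma choosable_colorable {α : Type*} (H : SimpleGraph α) (n : ℕ)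
    (h : Choosable H fun _ => n) : H.Colorable n := by
  obtain ⟨c, hcmem, hcprop⟩ := h (fun _ => Finset.range n) (fun _ => Finset.card_range n)
  exact ⟨SimpleGraph.Coloring.mk (fun x => ⟨c x, Finset.mem_range.mp (hcmem x)⟩)
    (fun {x y} hxy h' => hcprop hxy (congrArg Fin.val h'))⟩


end AuxLCC

/-- **LCC for multigraphs on four vertices.** For an arbitrary multigraph `G` on four
vertices, the chromatic index equals the list chromatic index. -/
theorem stmt_5 {V E : Type*} [Fintype V] [Fintype E] (G : Multigraph V E)
    (hcard : Fintype.card V = 4) :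
    chromNum (Multigraph.lineGraph G) = listChromNum (Multigraph.lineGraph G) := by
  classical
  set H := Multigraph.lineGraph G with hH
  have ε : V ≃ Fin 4 := Fintype.equivFinOfCardEq hcard
  set p : E → Sym2 (Fin 4) := fun e => (G.ends e).map ε with hp
  have hpd : ∀ e, ¬ (p e).IsDiag := by
    intro e h
    exact G.not_isDiag e ((Sym2.isDiag_map ε.injective).mp h)
  set t : E → Fin 3 := fun e => t0 (p e) with ht
  set σb : E → Bool := fun e => s0 (p e) with hσ
  have hshare : ∀ e q : E, (∃ x, x ∈ G.ends e ∧ x ∈ G.ends q) ↔ ∃ y, y ∈ p e ∧ y ∈ p q := by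
    intro e q
    constructor
    · rintro ⟨x, h1, h2⟩
      exact ⟨ε x, Sym2.mem_map.mpr ⟨x, h1, rfl⟩, Sym2.mem_map.mpr ⟨x, h2, rfl⟩⟩
    · rintro ⟨y, h1, h2⟩
      obtain ⟨a, ha, rfl⟩ := Sym2.mem_map.mp h1
      obtain ⟨b, hb, hab⟩ := Sym2.mem_map.mp h2
      exact ⟨a, ha, by rwa [← ε.injective hab]⟩
  have hadj : ∀ e q : E, H.Adj e q ↔ e ≠ q ∧ ¬(t e = t q ∧ ¬(σb e = σb q)) := by
    intro e q
    rw [hH]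
    have hkey := keyfact (p e) (p q) (hpd e) (hpd q)
    constructor
    · rintro ⟨hne, hsh⟩
      exact ⟨hne, hkey.mp ((hshare e q).mp hsh)⟩
    · rintro ⟨hne, hcond⟩
      exact ⟨hne, (hshare e q).mpr (hkey.mpr hcond)⟩
  set k : ℕ := wgt t σb Finset.univ with hk
  have hchoos : Choosable H (fun _ => k) := by
    intro A hA
    obtain ⟨c, h1, h2⟩ := core t σb Finset.univ.card Finset.univ le_rfl A
      (fun e _ => le_of_eq (hA e).symm)
    refine ⟨c, fun x => h1 x (mem_univ x), ?_⟩
    intro x y hxy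
    have h3 := (hadj x y).mp hxy
    refine h2 x (mem_univ x) y (mem_univ y) h3.1 ?_
    by_cases hteq : t x = t y
    · right
      by_contra hσne
      exact h3.2 ⟨hteq, hσne⟩
    · left; exact hteq
  have hcliq : ∀ n, H.Colorable n → k ≤ n := by
    intro n hn
    obtain ⟨C⟩ := hn
    set best : Fin 3 → Bool := fun i =>
      decide ((univ.filter (fun e => t e = i ∧ σb e = false)).card ≤
        (univ.filter (fun e => t e = i ∧ σb e = true)).card) with hbest
    set Clq : Finset E := univ.filter (fun e => σb e = best (t e)) with hClq
    have hcardClq : Clq.card = k := by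
      rw [hk, wgt_def]
      have h1 : Clq.card = ∑ i : Fin 3, (Clq.filter (fun e => t e = i)).card :=
        card_eq_sum_card_fiberwise (by simp)
      rw [h1]
      refine Finset.sum_congr rfl fun i _ => ?_
      have h2 : Clq.filter (fun e => t e = i)
          = univ.filter (fun e => t e = i ∧ σb e = best i) := by
        ext e
        simp only [hClq, filter_filter, mem_filter, mem_univ, true_and]
        constructor
        · rintro ⟨hb, hti⟩
          refine ⟨hti, ?_⟩
          rw [← hti]; exact hb
        · rintro ⟨hti, hb⟩
          exact ⟨by rw [hti]; exact hb, hti⟩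
      rw [h2]
      by_cases hcmp : (univ.filter (fun e => t e = i ∧ σb e = false)).card ≤
          (univ.filter (fun e => t e = i ∧ σb e = true)).card
      · have hbi : best i = true := by simp [hbest, hcmp]
        rw [hbi]
        exact (max_eq_left hcmp).symm
      · have hbi : best i = false := by simp [hbest, hcmp]
        rw [hbi]
        exact (max_eq_right (le_of_not_ge hcmp)).symm
    have hinj : Set.InjOn (fun e => C e) Clq := by
      intro x hx y hy hCxy
      by_contra hne
      have hxadj : H.Adj x y := by
        rw [hadj]
        refine ⟨hne, ?_⟩
        rintro ⟨hteq, hσne⟩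
        have hx' := (mem_filter.mp (Finset.mem_coe.mp hx)).2
        have hy' := (mem_filter.mp (Finset.mem_coe.mp hy)).2
        exact hσne (by rw [hx', hy', hteq])
      exact C.valid hxadj hCxy
    have hle := Finset.card_le_card_of_injOn (fun e => C e)
      (fun a _ => Finset.mem_univ (C a)) hinj
    rw [hcardClq] at hle
    simpa using hle
  have hmemLC : listChromNum H ∈ {n | Choosable H fun _ => n} := by
    rw [listChromNum]
    exact Nat.sInf_mem ⟨k, hchoos⟩
  have hcolLC : H.Colorable (listChromNum H) := choosable_colorable H _ hmemLC
  have h3 : chromNum H ≤ listChromNum H := Nat.sInf_le hcolLC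
  have h1 : listChromNum H ≤ k := Nat.sInf_le hchoos
  have h2 : k ≤ chromNum H := by
    have hne : {n | H.Colorable n}.Nonempty := ⟨_, hcolLC⟩
    have hmem : chromNum H ∈ {n | H.Colorable n} := by
      rw [chromNum]; exact Nat.sInf_mem hne
    exact hcliq _ hmem
  omega
end

section
/- For any line perfect multigraph G = (V,E), the chromatic index satisfies χ'(G) = max( max over v ∈ V of d_G(v), max over distinct triples a,b,c ∈ V of |E(a,b,c)| ), where E(a,b,c) denotes the set of all edges of G with both endpoints in {a,b,c}. -/
open scoped Classical

section Aux

variable {V E : Type*}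

lemma sym2_rep {z : Sym2 V} (hz : ¬ z.IsDiag) : ∃ p q : V, p ≠ q ∧ z = s(p, q) := by
  induction z using Sym2.ind with
  | _ p q => exact ⟨p, q, fun h => hz (Sym2.mk_isDiag_iff.mpr h), rfl⟩

lemma ends_rep (G : Multigraph V E) (e : E) : ∃ p q : V, p ≠ q ∧ G.ends e = s(p, q) :=
  sym2_rep (G.not_isDiag e)

/-- Structure of cliques in the line graph of a multigraph: either all edges share
a vertex, or all edges lie within a triangle. -/
lemma clique_structure (G : Multigraph V E) (s : Finset E) (hs : s.Nonempty)
    (hcl : (Multigraph.lineGraph G).IsClique ↑s) :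
    (∃ v : V, ∀ e ∈ s, v ∈ G.ends e) ∨
    (∃ a b c : V, a ≠ b ∧ a ≠ c ∧ b ≠ c ∧
      ∀ e ∈ s, ∀ x ∈ G.ends e, x = a ∨ x = b ∨ x = c) := by
  have share : ∀ e ∈ s, ∀ f ∈ s, e ≠ f → ∃ z, z ∈ G.ends e ∧ z ∈ G.ends f := by
    intro e he f hf hne
    exact (hcl he hf hne).2
  obtain ⟨e1, he1⟩ := hs
  obtain ⟨a, b, hab, hE1⟩ := ends_rep G e1
  by_cases hA : ∀ e ∈ s, a ∈ G.ends e
  · exact Or.inl ⟨a, hA⟩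
  push_neg at hA
  obtain ⟨e2, he2, ha2⟩ := hA
  have hne12 : e1 ≠ e2 := by
    rintro rfl; exact ha2 (hE1 ▸ Sym2.mem_mk_left a b)
  have hb2 : b ∈ G.ends e2 := by
    obtain ⟨z, hz1, hz2⟩ := share e1 he1 e2 he2 hne12
    rw [hE1, Sym2.mem_iff] at hz1
    rcases hz1 with rfl | rfl
    · exact absurd hz2 ha2
    · exact hz2
  obtain ⟨p, q, hpq, hE2⟩ := ends_rep G e2
  obtain ⟨c, hbc, hE2'⟩ : ∃ c : V, b ≠ c ∧ G.ends e2 = s(b, c) := by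
    rw [hE2, Sym2.mem_iff] at hb2
    rcases hb2 with rfl | rfl
    · exact ⟨q, hpq, hE2⟩
    · exact ⟨p, fun h => hpq h.symm, by rw [hE2, Sym2.eq_swap]⟩
  have hac : a ≠ c := by
    rintro rfl; exact ha2 (hE2' ▸ Sym2.mem_mk_right b a)
  by_cases hB : ∀ e ∈ s, b ∈ G.ends e
  · exact Or.inl ⟨b, hB⟩
  push_neg at hB
  obtain ⟨e3, he3, hb3⟩ := hB
  have hne13 : e1 ≠ e3 := by
    rintro rfl; exact hb3 (hE1 ▸ Sym2.mem_mk_right a b)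
  have hne23 : e2 ≠ e3 := by
    rintro rfl; exact hb3 (hE2' ▸ Sym2.mem_mk_left b c)
  have ha3 : a ∈ G.ends e3 := by
    obtain ⟨z, hz1, hz3⟩ := share e1 he1 e3 he3 hne13
    rw [hE1, Sym2.mem_iff] at hz1
    rcases hz1 with rfl | rfl
    · exact hz3
    · exact absurd hz3 hb3
  have hc3 : c ∈ G.ends e3 := by
    obtain ⟨z, hz2, hz3⟩ := share e2 he2 e3 he3 hne23
    rw [hE2', Sym2.mem_iff] at hz2
    rcases hz2 with rfl | rfl
    · exact absurd hz3 hb3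
    · exact hz3
  have hE3 : G.ends e3 = s(a, c) := (Sym2.mem_and_mem_iff hac).mp ⟨ha3, hc3⟩
  refine Or.inr ⟨a, b, c, hab, hac, hbc, ?_⟩
  intro e hes x hxe
  by_contra hxnot
  push_neg at hxnot
  obtain ⟨hxa, hxb, hxc⟩ := hxnot
  obtain ⟨p', q', hp'q', hEe⟩ := ends_rep G e
  obtain ⟨y, hxy, hEe'⟩ : ∃ y : V, x ≠ y ∧ G.ends e = s(x, y) := by
    have := hxe
    rw [hEe, Sym2.mem_iff] at this
    rcases this with rfl | rfl
    · exact ⟨q', hp'q', hEe⟩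
    · exact ⟨p', fun h => hp'q' h.symm, by rw [hEe, Sym2.eq_swap]⟩
  have hne_e1 : e ≠ e1 := by
    rintro rfl
    rw [hE1, Sym2.mem_iff] at hxe
    rcases hxe with rfl | rfl
    · exact hxa rfl
    · exact hxb rfl
  have hne_e2 : e ≠ e2 := by
    rintro rfl
    rw [hE2', Sym2.mem_iff] at hxe
    rcases hxe with rfl | rfl
    · exact hxb rfl
    · exact hxc rfl
  have hne_e3 : e ≠ e3 := by
    rintro rfl
    rw [hE3, Sym2.mem_iff] at hxe
    rcases hxe with rfl | rfl
    · exact hxa rfl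
    · exact hxc rfl
  have hy1 : y = a ∨ y = b := by
    obtain ⟨z, hze, hz1⟩ := share e hes e1 he1 hne_e1
    rw [hEe', Sym2.mem_iff] at hze
    rw [hE1, Sym2.mem_iff] at hz1
    rcases hze with rfl | rfl
    · rcases hz1 with rfl | rfl
      · exact absurd rfl hxa
      · exact absurd rfl hxb
    · exact hz1
  have hy2 : y = b ∨ y = c := by
    obtain ⟨z, hze, hz2⟩ := share e hes e2 he2 hne_e2
    rw [hEe', Sym2.mem_iff] at hze
    rw [hE2', Sym2.mem_iff] at hz2
    rcases hze with rfl | rfl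
    · rcases hz2 with rfl | rfl
      · exact absurd rfl hxb
      · exact absurd rfl hxc
    · exact hz2
  have hy3 : y = a ∨ y = c := by
    obtain ⟨z, hze, hz3⟩ := share e hes e3 he3 hne_e3
    rw [hEe', Sym2.mem_iff] at hze
    rw [hE3, Sym2.mem_iff] at hz3
    rcases hze with rfl | rfl
    · rcases hz3 with rfl | rfl
      · exact absurd rfl hxa
      · exact absurd rfl hxc
    · exact hz3
  rcases hy1 with rfl | rfl
  · rcases hy2 with h | h
    · exact hab h
    · exact hac h
  · rcases hy3 with h | h
    · exact hab h.symm
    · exact hbc h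

end Aux

section Aux2

lemma chromNum_iso {α β : Type*} {A : SimpleGraph α} {B : SimpleGraph β} (f : A ≃g B) :
    chromNum A = chromNum B := by
  unfold chromNum
  congr 1
  ext n
  exact ⟨fun h => SimpleGraph.Colorable.of_hom f.symm.toHom h, fun h => SimpleGraph.Colorable.of_hom f.toHom h⟩

lemma cliqNum_le_iso {α β : Type*} {A : SimpleGraph α} {B : SimpleGraph β} (f : A ≃g B)
    {n : ℕ} {s : Finset α} (hs : A.IsNClique n s) :
    B.IsNClique n (s.map f.toEquiv.toEmbedding) := by
  constructor
  · intro x hx y hy hne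
    rw [Finset.coe_map] at hx hy
    obtain ⟨u, hu, rfl⟩ := hx
    obtain ⟨v, hv, rfl⟩ := hy
    have huv : u ≠ v := by rintro rfl; exact hne rfl
    exact f.map_adj_iff.mpr (hs.isClique hu hv huv)
  · rw [Finset.card_map]; exact hs.card_eq

lemma cliqNum_iso {α β : Type*} {A : SimpleGraph α} {B : SimpleGraph β} (f : A ≃g B) :
    cliqNum A = cliqNum B := by
  unfold cliqNum
  congr 1
  ext n
  exact ⟨fun ⟨s, hs⟩ => ⟨_, cliqNum_le_iso f hs⟩, fun ⟨s, hs⟩ => ⟨_, cliqNum_le_iso f.symm hs⟩⟩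

variable {V E : Type*}

lemma triple_share {a b c p1 q1 p2 q2 : V} (hab : a ≠ b) (hac : a ≠ c) (hbc : b ≠ c)
    (h1 : p1 = a ∨ p1 = b ∨ p1 = c) (h2 : q1 = a ∨ q1 = b ∨ q1 = c)
    (h3 : p2 = a ∨ p2 = b ∨ p2 = c) (h4 : q2 = a ∨ q2 = b ∨ q2 = c)
    (hne1 : p1 ≠ q1) (hne2 : p2 ≠ q2) :
    p1 = p2 ∨ p1 = q2 ∨ q1 = p2 ∨ q1 = q2 := by
  rcases h1 with rfl|rfl|rfl <;> rcases h2 with h2|h2|h2 <;>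
    rcases h3 with h3|h3|h3 <;> rcases h4 with h4|h4|h4 <;> simp_all

end Aux2


/-- For a line perfect multigraph, the chromatic index is the maximum of the maximum
degree and the maximum number of edges spanned by three distinct vertices. -/
theorem stmt_10 {V E : Type*} [Fintype V] [Fintype E] (G : Multigraph V E)
    (hperf : IsPerfect (Multigraph.lineGraph G)) :
    chromNum (Multigraph.lineGraph G) =
      max (⨆ x : V, G.degree x)
        (sSup {m : ℕ | ∃ a b c : V, a ≠ b ∧ a ≠ c ∧ b ≠ c ∧
          m = {e : E | ∀ x ∈ G.ends e, x = a ∨ x = b ∨ x = c}.ncard}) := by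
  classical
  set L := Multigraph.lineGraph G with hL
  -- the clique-number set is bounded above
  have hbdd : BddAbove {n | ∃ s : Finset E, L.IsNClique n s} := by
    refine ⟨Fintype.card E, ?_⟩
    rintro n ⟨s, hs⟩
    exact hs.card_eq ▸ Finset.card_le_univ s
  have hTbdd : BddAbove {m : ℕ | ∃ a b c : V, a ≠ b ∧ a ≠ c ∧ b ≠ c ∧
      m = {e : E | ∀ x ∈ G.ends e, x = a ∨ x = b ∨ x = c}.ncard} := by
    refine ⟨Fintype.card E, ?_⟩
    rintro m ⟨a, b, c, _, _, _, rfl⟩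
    calc {e : E | ∀ x ∈ G.ends e, x = a ∨ x = b ∨ x = c}.ncard
        ≤ (Set.univ : Set E).ncard := Set.ncard_le_ncard (Set.subset_univ _) Set.finite_univ
      _ = Fintype.card E := by rw [Set.ncard_univ, Nat.card_eq_fintype_card]
  -- perfection on the whole graph, transferred along the iso with `induce univ`
  have hperf' : chromNum L = cliqNum L := by
    have h0 := hperf Set.univ
    have h1 := chromNum_iso (SimpleGraph.induceUnivIso L)
    have h2 := cliqNum_iso (SimpleGraph.induceUnivIso L)
    rw [← h1, ← h2]
    exact h0
  rw [hperf']
  apply le_antisymm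
  · -- cliqNum ≤ max
    have h0 : (0 : ℕ) ∈ {n | ∃ s : Finset E, L.IsNClique n s} :=
      ⟨∅, SimpleGraph.isNClique_empty.mpr rfl⟩
    apply csSup_le ⟨0, h0⟩
    rintro n ⟨s, hs⟩
    rcases s.eq_empty_or_nonempty with rfl | hne
    · have : n = 0 := by simpa using hs.card_eq.symm
      simp [this]
    rcases clique_structure G s hne hs.isClique with ⟨v, hv⟩ | ⟨a, b, c, hab, hac, hbc, htri⟩
    · -- bounded by a degree
      refine le_trans ?_ (le_max_left _ _)
      have hsub : (↑s : Set E) ⊆ {e : E | v ∈ G.ends e} := fun e he => hv e he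
      have h1 : n ≤ G.degree v := by
        rw [← hs.card_eq, ← Set.ncard_coe_finset]
        exact Set.ncard_le_ncard hsub (Set.toFinite _)
      exact le_trans h1 (le_ciSup (Set.Finite.bddAbove (Set.finite_range _)) v)
    · -- bounded by a triangle count
      refine le_trans ?_ (le_max_right _ _)
      have hsub : (↑s : Set E) ⊆ {e : E | ∀ x ∈ G.ends e, x = a ∨ x = b ∨ x = c} :=
        fun e he => htri e he
      have h1 : n ≤ {e : E | ∀ x ∈ G.ends e, x = a ∨ x = b ∨ x = c}.ncard := by
        rw [← hs.card_eq, ← Set.ncard_coe_finset]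
        exact Set.ncard_le_ncard hsub (Set.toFinite _)
      exact le_trans h1 (le_csSup hTbdd ⟨a, b, c, hab, hac, hbc, rfl⟩)
  · -- max ≤ cliqNum
    apply max_le
    · -- degrees
      rcases isEmpty_or_nonempty V with hV | hV
      · simp [ciSup_of_empty]
      refine ciSup_le fun v => ?_
      refine le_csSup hbdd ⟨{e : E | v ∈ G.ends e}.toFinset, ?_, ?_⟩
      · intro e he f hf hnef
        rw [Finset.mem_coe, Set.mem_toFinset] at he hf
        exact ⟨hnef, v, he, hf⟩
      · rw [← Set.ncard_eq_toFinset_card']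
        rfl
    · -- triangles
      rcases Set.eq_empty_or_nonempty {m : ℕ | ∃ a b c : V, a ≠ b ∧ a ≠ c ∧ b ≠ c ∧
          m = {e : E | ∀ x ∈ G.ends e, x = a ∨ x = b ∨ x = c}.ncard} with hT | hT
      · rw [hT, csSup_empty]
        exact bot_le
      refine csSup_le hT ?_
      rintro m ⟨a, b, c, hab, hac, hbc, rfl⟩
      refine le_csSup hbdd ⟨{e : E | ∀ x ∈ G.ends e, x = a ∨ x = b ∨ x = c}.toFinset, ?_, ?_⟩
      · intro e he f hf hnef
        rw [Finset.mem_coe, Set.mem_toFinset] at he hf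
        refine ⟨hnef, ?_⟩
        obtain ⟨p1, q1, hpq1, hE1⟩ := ends_rep G e
        obtain ⟨p2, q2, hpq2, hE2⟩ := ends_rep G f
        have h1 := he p1 (hE1 ▸ Sym2.mem_mk_left p1 q1)
        have h2 := he q1 (hE1 ▸ Sym2.mem_mk_right p1 q1)
        have h3 := hf p2 (hE2 ▸ Sym2.mem_mk_left p2 q2)
        have h4 := hf q2 (hE2 ▸ Sym2.mem_mk_right p2 q2)
        rcases triple_share hab hac hbc h1 h2 h3 h4 hpq1 hpq2 with h | h | h | h
        · exact ⟨p1, hE1 ▸ Sym2.mem_mk_left p1 q1, h ▸ hE2 ▸ Sym2.mem_mk_left p2 q2⟩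
        · exact ⟨p1, hE1 ▸ Sym2.mem_mk_left p1 q1, h ▸ hE2 ▸ Sym2.mem_mk_right p2 q2⟩
        · exact ⟨q1, hE1 ▸ Sym2.mem_mk_right p1 q1, h ▸ hE2 ▸ Sym2.mem_mk_left p2 q2⟩
        · exact ⟨q1, hE1 ▸ Sym2.mem_mk_right p1 q1, h ▸ hE2 ▸ Sym2.mem_mk_right p2 q2⟩
      · rw [← Set.ncard_eq_toFinset_card']
end

section
/- Let G = (V,E) be a multigraph on vertices v_1,…,v_n,a,b such that {v_1,…,v_n} is an independent set, and suppose t_G(v_1) ≥ t_G(v_2) ≥ … ≥ t_G(v_n). Then no v_i with i > 1 is great in G. -/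
open scoped Classical

namespace Multigraph

variable {V E : Type*}

/-- `t_G(x)`: the number of edges of the triangle on the vertices `a`, `b`, `x`,
i.e. of edges with both endpoints in `{a, b, x}`. -/
noncomputable def triCount (G : Multigraph V E) (a b x : V) : ℕ :=
  {e : E | ∀ y ∈ G.ends e, y = a ∨ y = b ∨ y = x}.ncard

/-- `x` is big (relative to `a`, `b`) if `t_G(x) ≥ max (d_G(a), d_G(b))`. -/
def Big (G : Multigraph V E) (a b x : V) : Prop :=
  max (G.degree a) (G.degree b) ≤ G.triCount a b x

/-- `x` is great (relative to `a`, `b`) if `t_G(x) > max (d_G(a), d_G(b))`. -/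
def Great (G : Multigraph V E) (a b x : V) : Prop :=
  max (G.degree a) (G.degree b) < G.triCount a b x

/-- The multigraph obtained from `G` by deleting the edges `e` and `q`. -/
def delete (G : Multigraph V E) (e q : E) : Multigraph V {r : E // r ≠ e ∧ r ≠ q} where
  ends r := G.ends r.1
  not_isDiag r := G.not_isDiag r.1

end Multigraph


section Aux

open Multigraph

variable {V E : Type*} [Fintype E]

/-- The number of edges between `x` and `y`. -/
noncomputable def ec (G : Multigraph V E) (x y : V) : ℕ :=
  {e : E | G.ends e = s(x, y)}.ncard

lemma ec_comm (G : Multigraph V E) (x y : V) : ec G x y = ec G y x := by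
  unfold ec
  congr 1
  ext e
  simp only [Set.mem_setOf_eq]
  rw [Sym2.eq_swap]

lemma exists_ends (G : Multigraph V E) (e : E) : ∃ p q : V, G.ends e = s(p, q) := by
  obtain ⟨⟨p, q⟩, h⟩ := Quot.exists_rep (G.ends e)
  exact ⟨p, q, h.symm⟩

lemma triCount_eq (G : Multigraph V E) {a b x : V} (hab : a ≠ b) (hax : a ≠ x)
    (hbx : b ≠ x) :
    G.triCount a b x = ec G a b + ec G a x + ec G b x := by
  have hset : {e : E | ∀ y ∈ G.ends e, y = a ∨ y = b ∨ y = x}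
      = ({e : E | G.ends e = s(a, b)} ∪ {e | G.ends e = s(a, x)}) ∪ {e | G.ends e = s(b, x)} := by
    ext e
    simp only [Set.mem_setOf_eq, Set.mem_union]
    constructor
    · intro h
      obtain ⟨p, q, hpq⟩ := exists_ends G e
      have hd := G.not_isDiag e
      rw [hpq] at hd
      have hpq' : p ≠ q := by simpa using hd
      have hp : p = a ∨ p = b ∨ p = x := h p (by rw [hpq]; simp)
      have hq : q = a ∨ q = b ∨ q = x := h q (by rw [hpq]; simp)
      rw [hpq]
      rcases hp with rfl | rfl | rfl <;> rcases hq with rfl | rfl | rfl <;>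
        simp_all [Sym2.eq_iff]
    · rintro ((h | h) | h) y hy <;> rw [h] at hy <;> rw [Sym2.mem_iff] at hy <;> tauto
  have d1 : Disjoint {e : E | G.ends e = s(a, b)} {e : E | G.ends e = s(a, x)} := by
    rw [Set.disjoint_left]
    rintro e h1 h2
    simp only [Set.mem_setOf_eq] at h1 h2
    rw [h1, Sym2.eq_iff] at h2
    tauto
  have d2 : Disjoint ({e : E | G.ends e = s(a, b)} ∪ {e : E | G.ends e = s(a, x)})
      {e : E | G.ends e = s(b, x)} := by
    rw [Set.disjoint_left]
    rintro e (h1 | h1) h2 <;> simp only [Set.mem_setOf_eq] at h1 h2 <;>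
      rw [h1, Sym2.eq_iff] at h2 <;> tauto
  rw [Multigraph.triCount, hset, Set.ncard_union_eq d2 (Set.toFinite _) (Set.toFinite _),
    Set.ncard_union_eq d1 (Set.toFinite _) (Set.toFinite _)]
  rfl

lemma deg_ge (G : Multigraph V E) {a x y z : V} (hxy : x ≠ y) (hxz : x ≠ z) (hyz : y ≠ z) :
    ec G a x + ec G a y + ec G a z ≤ G.degree a := by
  have d1 : Disjoint {e : E | G.ends e = s(a, x)} {e : E | G.ends e = s(a, y)} := by
    rw [Set.disjoint_left]
    rintro e h1 h2
    simp only [Set.mem_setOf_eq] at h1 h2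
    rw [h1, Sym2.eq_iff] at h2
    rcases h2 with ⟨_, rfl⟩ | ⟨rfl, rfl⟩ <;> exact hxy rfl
  have d2 : Disjoint ({e : E | G.ends e = s(a, x)} ∪ {e : E | G.ends e = s(a, y)})
      {e : E | G.ends e = s(a, z)} := by
    rw [Set.disjoint_left]
    rintro e (h1 | h1) h2 <;> simp only [Set.mem_setOf_eq] at h1 h2 <;>
      rw [h1, Sym2.eq_iff] at h2
    · rcases h2 with ⟨_, rfl⟩ | ⟨rfl, rfl⟩ <;> exact hxz rfl
    · rcases h2 with ⟨_, rfl⟩ | ⟨rfl, rfl⟩ <;> exact hyz rfl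
  have hsub : ({e : E | G.ends e = s(a, x)} ∪ {e : E | G.ends e = s(a, y)})
      ∪ {e : E | G.ends e = s(a, z)} ⊆ {e : E | a ∈ G.ends e} := by
    rintro e ((h | h) | h) <;> simp only [Set.mem_setOf_eq] at h ⊢ <;> rw [h] <;> simp
  calc ec G a x + ec G a y + ec G a z
      = (({e : E | G.ends e = s(a, x)} ∪ {e : E | G.ends e = s(a, y)})
        ∪ {e : E | G.ends e = s(a, z)}).ncard := by
        rw [Set.ncard_union_eq d2 (Set.toFinite _) (Set.toFinite _),
          Set.ncard_union_eq d1 (Set.toFinite _) (Set.toFinite _)]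
        rfl
    _ ≤ G.degree a := Set.ncard_le_ncard hsub (Set.toFinite _)

end Aux

/-- In a multigraph on `v₁, …, vₙ, a, b` with `{v₁, …, vₙ}` independent and
`t_G(v₁) ≥ t_G(v₂) ≥ … ≥ t_G(vₙ)`, no `vᵢ` with `i > 1` is great. -/
theorem stmt_13 {V E : Type*} [Fintype V] [Fintype E] (G : Multigraph V E)
    (n : ℕ) (v : Fin n → V) (a b : V)
    (hab : a ≠ b) (hva : ∀ i, v i ≠ a) (hvb : ∀ i, v i ≠ b)
    (hinj : Function.Injective v)
    (hcover : ∀ x : V, x = a ∨ x = b ∨ ∃ i, x = v i)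
    (hind : ∀ (e : E) (i j : Fin n), G.ends e ≠ s(v i, v j))
    (hmono : ∀ i j : Fin n, i ≤ j → G.triCount a b (v j) ≤ G.triCount a b (v i)) :
    ∀ i : Fin n, 0 < (i : ℕ) → ¬ G.Great a b (v i) := by
  intro i hi hgreat
  have hn : (0 : ℕ) < n := lt_of_le_of_lt (Nat.zero_le _) i.isLt
  set j : Fin n := ⟨0, hn⟩ with hj
  have hji : j ≤ i := by
    rw [Fin.le_def]
    exact Nat.zero_le _
  have hvji : v j ≠ v i := fun h => by
    have h2 : (j : ℕ) = (i : ℕ) := congrArg Fin.val (hinj h)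
    simp only [hj] at h2
    omega
  have ht_i := triCount_eq G hab (Ne.symm (hva i)) (Ne.symm (hvb i))
  have ht_j := triCount_eq G hab (Ne.symm (hva j)) (Ne.symm (hvb j))
  have hda : ec G a b + ec G a (v j) + ec G a (v i) ≤ G.degree a :=
    deg_ge G (Ne.symm (hvb j)) (Ne.symm (hvb i)) hvji
  have hdb : ec G b a + ec G b (v j) + ec G b (v i) ≤ G.degree b :=
    deg_ge G (Ne.symm (hva j)) (Ne.symm (hva i)) hvji
  rw [ec_comm G b a] at hdb
  rw [ec_comm G b (v j)] at ht_j hdb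
  rw [ec_comm G b (v i)] at ht_i hdb
  have hmono' := hmono j i hji
  have hgr := hgreat
  rw [Multigraph.Great, ht_i] at hgr
  rw [ht_i, ht_j] at hmono'
  have h1 : G.degree a < ec G a b + ec G a (v i) + ec G (v i) b :=
    lt_of_le_of_lt (le_max_left _ _) hgr
  have h2 : G.degree b < ec G a b + ec G a (v i) + ec G (v i) b :=
    lt_of_le_of_lt (le_max_right _ _) hgr
  omega
end
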